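/- Let F be a field of characteristic different from 2, let n ≥ 0, and let a_1,…,a_n be nonzero elements of F. Let E := F[y_1,…,y_n]/(y_1² − a_1, …, y_n² − a_n), an F-algebra, and for each subset S ⊆ {1,…,n} let m_S ∈ E denote the image of the monomial ∏_{i∈S} y_i. Then the family (m_S)_{S ⊆ {1,…,n}} is an F-basis of E, and the trace form of E over F is diagonal in this basis: for all subsets S, T ⊆ {1,…,n}, the trace Tr_{E/F}(m_S · m_T) equals 2^n · ∏_{i∈S} a_i if S = T, and equals 0 if S ≠ T. -/

import Mathlib

open MvPolynomial

/-- The ideal `(y₁² − a₁, …, yₙ² − aₙ) ⊆ F[y₁,…,yₙ]`. -/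
noncomputable def sqrtIdeal (F : Type*) [Field F] (n : ℕ) (a : Fin n → F) :
    Ideal (MvPolynomial (Fin n) F) :=
  Ideal.span {f : MvPolynomial (Fin n) F | ∃ i : Fin n, f = X i ^ 2 - C (a i)}

/-- The `F`-algebra `E = F[y₁,…,yₙ]/(y₁² − a₁, …, yₙ² − aₙ)`. -/
abbrev MultiQuadExt (F : Type*) [Field F] (n : ℕ) (a : Fin n → F) :=
  MvPolynomial (Fin n) F ⧸ sqrtIdeal F n a

/-- For a subset `S ⊆ {1,…,n}`, the image `m_S ∈ E` of the monomial `∏_{i∈S} yᵢ`. -/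
noncomputable def monS (F : Type*) [Field F] (n : ℕ) (a : Fin n → F)
    (S : Finset (Fin n)) : MultiQuadExt F n a :=
  Ideal.Quotient.mk (sqrtIdeal F n a) (∏ i ∈ S, X i)

section Aux

variable {F : Type*} [Field F] {n : ℕ} (a : Fin n → F)

/-- odd support of an exponent vector -/
def oddPart (d : Fin n →₀ ℕ) : Finset (Fin n) := Finset.univ.filter (fun i => d i % 2 = 1)

/-- indicator exponent vector of a set -/
noncomputable def indF (S : Finset (Fin n)) : Fin n →₀ ℕ :=
  Finsupp.equivFunOnFinite.symm (fun i => if i ∈ S then 1 else 0)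

lemma indF_apply (S : Finset (Fin n)) (i : Fin n) : indF S i = if i ∈ S then 1 else 0 := rfl

lemma prodX_eq (S : Finset (Fin n)) :
    (∏ i ∈ S, X i : MvPolynomial (Fin n) F) = monomial (indF S) 1 := by
  rw [← prod_X_pow_eq_monomial]
  have hs : (indF S : Fin n →₀ ℕ).support = S := by
    ext i; simp [Finsupp.mem_support_iff, indF_apply]
  rw [hs]
  refine Finset.prod_congr rfl fun i hi => ?_
  rw [indF_apply, if_pos hi, pow_one]

lemma oddPart_indF (S : Finset (Fin n)) : oddPart (indF S) = S := by
  ext i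
  by_cases h : i ∈ S <;> simp only [oddPart, Finset.mem_filter, Finset.mem_univ, true_and] <;>
    simp [indF_apply, h]

/-- the reduction map -/
noncomputable def redMap : MvPolynomial (Fin n) F →ₗ[F] (Finset (Fin n) →₀ F) :=
  (basisMonomials (Fin n) F).constr F
    (fun d => (∏ i, a i ^ (d i / 2)) • Finsupp.single (oddPart d) 1)

lemma redMap_monomial (d : Fin n →₀ ℕ) (c : F) :
    redMap a (monomial d c) = (c * ∏ i, a i ^ (d i / 2)) • Finsupp.single (oddPart d) 1 := by
  have h1 : (monomial d c : MvPolynomial (Fin n) F) = c • monomial d 1 := by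
    rw [smul_monomial, smul_eq_mul, mul_one]
  have h2 : (monomial d 1 : MvPolynomial (Fin n) F) = basisMonomials (Fin n) F d := by
    rw [coe_basisMonomials]
  rw [h1, map_smul, h2]
  simp only [redMap, Module.Basis.constr_basis, smul_smul]

lemma redMap_mul_gen (f : MvPolynomial (Fin n) F) (i : Fin n) :
    redMap a (f * (X i ^ 2 - C (a i))) = 0 := by
  induction f using MvPolynomial.induction_on' with
  | add p q hp hq => rw [add_mul, map_add, hp, hq, add_zero]
  | monomial d c =>
    have key : (monomial d c : MvPolynomial (Fin n) F) * (X i ^ 2 - C (a i)) =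
        monomial (d + Finsupp.single i 2) c - monomial d (c * a i) := by
      rw [mul_sub, X_pow_eq_monomial, monomial_mul, mul_one]
      congr 1
      rw [show (C (a i) : MvPolynomial (Fin n) F) = monomial 0 (a i) from rfl, monomial_mul,
        add_zero]
    rw [key, map_sub, redMap_monomial, redMap_monomial]
    have hodd : oddPart (d + Finsupp.single i 2) = oddPart d := by
      ext j
      simp only [oddPart, Finset.mem_filter, Finsupp.add_apply, Finsupp.single_apply]
      by_cases h : i = j <;> simp [h, Nat.add_mul_mod_self_left, Nat.add_mod_right]
    have hprod : (∏ j, a j ^ ((d + Finsupp.single i 2 : Fin n →₀ ℕ) j / 2)) =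
        a i * ∏ j, a j ^ (d j / 2) := by
      have he1 : (d + Finsupp.single i 2 : Fin n →₀ ℕ) i / 2 = d i / 2 + 1 := by
        simp [Nat.add_div_right]
      have he2 : ∀ j ∈ Finset.univ.erase i,
          a j ^ ((d + Finsupp.single i 2 : Fin n →₀ ℕ) j / 2) = a j ^ (d j / 2) := by
        intro j hj
        have : (d + Finsupp.single i 2 : Fin n →₀ ℕ) j = d j := by
          simp only [Finsupp.add_apply, Finsupp.single_apply]
          rw [if_neg (fun h => (Finset.mem_erase.mp hj).1 h.symm), add_zero]
        rw [this]
      rw [← Finset.mul_prod_erase Finset.univ _ (Finset.mem_univ i),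
        ← Finset.mul_prod_erase Finset.univ (fun j => a j ^ (d j / 2)) (Finset.mem_univ i),
        he1, pow_succ, Finset.prod_congr rfl he2]
      ring
    rw [hodd, hprod, ← sub_smul]
    convert zero_smul F _
    ring

lemma sqrtIdeal_eq : sqrtIdeal F n a =
    Ideal.span (Set.range fun i : Fin n => (X i ^ 2 - C (a i) : MvPolynomial (Fin n) F)) := by
  unfold sqrtIdeal
  congr 1
  ext f
  simp [Set.mem_range, eq_comm]

lemma redMap_ideal (x : MvPolynomial (Fin n) F) (hx : x ∈ sqrtIdeal F n a) :
    redMap a x = 0 := by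
  rw [sqrtIdeal_eq, Ideal.mem_span_range_iff_exists_fun] at hx
  obtain ⟨c, rfl⟩ := hx
  rw [map_sum]
  exact Finset.sum_eq_zero fun i _ => redMap_mul_gen a (c i) i

lemma mk_C (c : F) :
    Ideal.Quotient.mk (sqrtIdeal F n a) (C c) = algebraMap F (MultiQuadExt F n a) c := by
  rw [IsScalarTower.algebraMap_apply F (MvPolynomial (Fin n) F) (MultiQuadExt F n a),
    Ideal.Quotient.algebraMap_eq, MvPolynomial.algebraMap_eq]

lemma mk_smul (c : F) (p : MvPolynomial (Fin n) F) :
    Ideal.Quotient.mk (sqrtIdeal F n a) (C c * p)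
      = c • Ideal.Quotient.mk (sqrtIdeal F n a) p := by
  rw [map_mul, mk_C, ← Algebra.smul_def]

lemma mkX_sq (i : Fin n) :
    (Ideal.Quotient.mk (sqrtIdeal F n a) (X i)) ^ 2
      = algebraMap F (MultiQuadExt F n a) (a i) := by
  rw [← map_pow, ← mk_C a (a i), Ideal.Quotient.eq]
  exact Ideal.subset_span ⟨i, rfl⟩

lemma mkX_pow (i : Fin n) (e : ℕ) :
    (Ideal.Quotient.mk (sqrtIdeal F n a) (X i)) ^ e
      = algebraMap F (MultiQuadExt F n a) (a i ^ (e / 2))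
        * (Ideal.Quotient.mk (sqrtIdeal F n a) (X i)) ^ (e % 2) := by
  conv_lhs => rw [← Nat.div_add_mod e 2, pow_add, pow_mul, mkX_sq, ← map_pow]

lemma mk_monomial (d : Fin n →₀ ℕ) (c : F) :
    Ideal.Quotient.mk (sqrtIdeal F n a) (monomial d c)
      = (c * ∏ i, a i ^ (d i / 2)) • monS F n a (oddPart d) := by
  have h0 : (monomial d c : MvPolynomial (Fin n) F) = C c * ∏ i, X i ^ d i := by
    rw [monomial_eq]
    congr 1
    exact Finsupp.prod_fintype _ _ fun i => pow_zero _
  rw [h0, mk_smul, map_prod]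
  have h1 : ∀ i : Fin n, Ideal.Quotient.mk (sqrtIdeal F n a) (X i ^ d i)
      = algebraMap F (MultiQuadExt F n a) (a i ^ (d i / 2))
        * (Ideal.Quotient.mk (sqrtIdeal F n a) (X i)) ^ (d i % 2) := by
    intro i; rw [map_pow, mkX_pow]
  rw [Finset.prod_congr rfl fun i _ => h1 i, Finset.prod_mul_distrib, ← map_prod]
  have h2 : (∏ i : Fin n, (Ideal.Quotient.mk (sqrtIdeal F n a) (X i)) ^ (d i % 2))
      = monS F n a (oddPart d) := by
    rw [← Finset.prod_filter_mul_prod_filter_not Finset.univ (fun i => d i % 2 = 1)]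
    have hA : ∀ i ∈ Finset.univ.filter (fun i => d i % 2 = 1),
        (Ideal.Quotient.mk (sqrtIdeal F n a) (X i)) ^ (d i % 2)
          = Ideal.Quotient.mk (sqrtIdeal F n a) (X i) := by
      intro i hi
      rw [(Finset.mem_filter.mp hi).2, pow_one]
    have hB : ∀ i ∈ Finset.univ.filter (fun i => ¬ d i % 2 = 1),
        (Ideal.Quotient.mk (sqrtIdeal F n a) (X i)) ^ (d i % 2) = 1 := by
      intro i hi
      have := (Finset.mem_filter.mp hi).2
      have h2' : d i % 2 = 0 := by omega
      rw [h2', pow_zero]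
    rw [Finset.prod_congr rfl hA, Finset.prod_congr rfl hB, Finset.prod_const_one, mul_one]
    rw [monS, map_prod]
    rfl
  rw [h2, ← Algebra.smul_def, smul_smul]

lemma redMap_prodX (S : Finset (Fin n)) :
    redMap a (∏ i ∈ S, X i) = Finsupp.single S 1 := by
  rw [prodX_eq, redMap_monomial, oddPart_indF]
  have : ∀ i : Fin n, (indF S) i / 2 = 0 := by
    intro i; rw [indF_apply]; split <;> rfl
  simp [this]

end Aux

section Mul
variable {F : Type*} [Field F] {n : ℕ} (a : Fin n → F)

lemma monS_mul (S T : Finset (Fin n)) :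
    monS F n a S * monS F n a T = (∏ i ∈ S ∩ T, a i) • monS F n a (symmDiff S T) := by
  classical
  have hdis : Disjoint (symmDiff S T) (S ∩ T) := by
    rw [Finset.disjoint_left]
    intro x hx hx'
    rw [Finset.mem_symmDiff] at hx
    rw [Finset.mem_inter] at hx'
    tauto
  have hset : symmDiff S T ∪ S ∩ T = S ∪ T := by
    ext x
    simp only [Finset.mem_union, Finset.mem_symmDiff, Finset.mem_inter]
    tauto
  have hpoly : (∏ i ∈ S, X i : MvPolynomial (Fin n) F) * ∏ i ∈ T, X i
      = (∏ i ∈ symmDiff S T, X i) * ∏ i ∈ S ∩ T, X i ^ 2 := by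
    have h2 : ∀ i ∈ S ∩ T, (X i : MvPolynomial (Fin n) F) ^ 2 = X i * X i :=
      fun i _ => sq (X i)
    rw [Finset.prod_congr rfl h2, Finset.prod_mul_distrib, ← mul_assoc,
      ← Finset.prod_union hdis, hset, Finset.prod_union_inter]
  have h3 : ∀ i ∈ S ∩ T, Ideal.Quotient.mk (sqrtIdeal F n a) (X i ^ 2)
      = algebraMap F (MultiQuadExt F n a) (a i) :=
    fun i _ => by rw [map_pow, mkX_sq]
  rw [monS, monS, ← map_mul, hpoly, map_mul, map_prod, map_prod,
    Finset.prod_congr rfl h3, ← map_prod (algebraMap F (MultiQuadExt F n a)) _ _,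
    mul_comm, ← Algebra.smul_def, monS, map_prod]

set_option synthInstance.maxHeartbeats 1000000 in
lemma monS_linearIndependent : LinearIndependent F (monS F n a) := by
  classical
  rw [Fintype.linearIndependent_iff]
  intro g hg S
  have h0 : Ideal.Quotient.mk (sqrtIdeal F n a) (∑ T, C (g T) * ∏ i ∈ T, X i) = 0 := by
    rw [map_sum (Ideal.Quotient.mk (sqrtIdeal F n a)) _ _,
      Finset.sum_congr rfl fun T _ => mk_smul a (g T) _]
    exact hg
  have hmem : (∑ T, C (g T) * ∏ i ∈ T, X i : MvPolynomial (Fin n) F) ∈ sqrtIdeal F n a :=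
    Ideal.Quotient.eq_zero_iff_mem.mp h0
  have hred := redMap_ideal a _ hmem
  rw [map_sum] at hred
  have heach : ∀ T, redMap a (C (g T) * ∏ i ∈ T, X i) = g T • Finsupp.single T 1 := by
    intro T
    rw [← MvPolynomial.smul_eq_C_mul, map_smul, redMap_prodX]
  rw [Finset.sum_congr rfl fun T _ => heach T] at hred
  have hS := DFunLike.congr_fun hred S
  simpa [Finsupp.single_apply] using hS

set_option synthInstance.maxHeartbeats 1000000 in
lemma monS_span : ⊤ ≤ Submodule.span F (Set.range (monS F n a)) := by
  rintro x -
  obtain ⟨p, rfl⟩ := Ideal.Quotient.mk_surjective x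
  rw [p.as_sum, map_sum (Ideal.Quotient.mk (sqrtIdeal F n a)) _ _]
  refine Submodule.sum_mem _ fun d _ => ?_
  rw [mk_monomial]
  exact Submodule.smul_mem _ _ (Submodule.subset_span ⟨oddPart d, rfl⟩)

end Mul


/-- Let `F` be a field of characteristic `≠ 2`, `n ≥ 0`, and `a₁,…,aₙ` nonzero elements
of `F`. Let `E = F[y₁,…,yₙ]/(y₁² − a₁, …, yₙ² − aₙ)` and `m_S` the image of `∏_{i∈S} yᵢ`.
Then the family `(m_S)_{S ⊆ {1,…,n}}` is an `F`-basis of `E`, and the trace form of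
`E/F` is diagonal in this basis: `Tr_{E/F}(m_S · m_T) = 2^n · ∏_{i∈S} aᵢ` if `S = T`,
and `= 0` otherwise. -/
theorem stmt14 (F : Type*) [Field F] (hF : ringChar F ≠ 2) (n : ℕ)
    (a : Fin n → F) (ha : ∀ i, a i ≠ 0) :
    (∃ b : Module.Basis (Finset (Fin n)) F (MultiQuadExt F n a),
        ∀ S : Finset (Fin n), b S = monS F n a S) ∧
    ∀ S T : Finset (Fin n),
      Algebra.trace F (MultiQuadExt F n a) (monS F n a S * monS F n a T)
        = if S = T then (2 : F) ^ n * ∏ i ∈ S, a i else 0 := by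
  classical
  have hli : LinearIndependent F (monS F n a) := monS_linearIndependent a
  have hsp : ⊤ ≤ Submodule.span F (Set.range (monS F n a)) := monS_span a
  let b : Module.Basis (Finset (Fin n)) F (MultiQuadExt F n a) := Module.Basis.mk hli hsp
  have hb : ∀ S, b S = monS F n a S := fun S => Module.Basis.mk_apply hli hsp S
  refine ⟨⟨b, hb⟩, ?_⟩
  intro S T
  rw [monS_mul]
  by_cases hST : S = T
  · subst hST
    rw [if_pos rfl, symmDiff_self, Finset.inter_self]
    have hm1 : monS F n a (⊥ : Finset (Fin n)) = 1 := by
      rw [Finset.bot_eq_empty, monS, Finset.prod_empty, map_one]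
    rw [hm1]
    have hsm : ((∏ i ∈ S, a i) • (1 : MultiQuadExt F n a))
        = algebraMap F (MultiQuadExt F n a) (∏ i ∈ S, a i) :=
      (Algebra.algebraMap_eq_smul_one _).symm
    rw [hsm, Algebra.trace_algebraMap_of_basis b, Fintype.card_finset, Fintype.card_fin,
      nsmul_eq_mul]
    push_cast
    ring
  · rw [if_neg hST, map_smul]
    have hU : symmDiff S T ≠ ⊥ := fun h => hST (symmDiff_eq_bot.mp h)
    have htr : Algebra.trace F (MultiQuadExt F n a) (monS F n a (symmDiff S T)) = 0 := by
      rw [Algebra.trace_eq_matrix_trace b, Matrix.trace]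
      refine Finset.sum_eq_zero fun W _ => ?_
      rw [Matrix.diag_apply, Algebra.leftMulMatrix_eq_repr_mul, hb, monS_mul, map_smul,
        ← hb, Module.Basis.repr_self]
      have hne : symmDiff (symmDiff S T) W ≠ W := fun h => hU (symmDiff_eq_right.mp h)
      rw [Finsupp.smul_apply, Finsupp.single_apply, if_neg hne, smul_zero]
    rw [htr, smul_zero]
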